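/- Let x ∈ (0,1) and θ ∈ (0,1). Then for each a > 0: Σ_{k=1}^∞ x^{θ^k} e^{−ak} ≤ (e^a / |ln θ|) · Γ( a/|ln θ| ) · |ln x|^{−a/|ln θ|}, where Γ denotes the Gamma function Γ(s) = ∫_0^∞ t^{s−1} e^{−t} dt. -/

import Mathlib

open scoped Real
open MeasureTheory Set

/-- Lemma 3.2 (i): for `x, θ ∈ (0,1)` and `a > 0`,
`Σ_{k=1}^∞ x^{θ^k} e^{-ak} ≤ (e^a/|ln θ|) Γ(a/|ln θ|) |ln x|^{-a/|ln θ|}`. -/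
theorem sum_rpow_exp_le (x θ : ℝ) (hx : x ∈ Set.Ioo (0 : ℝ) 1) (hθ : θ ∈ Set.Ioo (0 : ℝ) 1)
    (a : ℝ) (ha : 0 < a) :
    (∑' k : ℕ, x ^ (θ ^ (k + 1)) * Real.exp (-a * ((k : ℝ) + 1))) ≤
      Real.exp a / |Real.log θ| * Real.Gamma (a / |Real.log θ|) *
        |Real.log x| ^ (-(a / |Real.log θ|)) := by
  obtain ⟨hx0, hx1⟩ := hx
  obtain ⟨hθ0, hθ1⟩ := hθ
  have hlogθ : Real.log θ < 0 := Real.log_neg hθ0 hθ1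
  have hlogx : Real.log x < 0 := Real.log_neg hx0 hx1
  set b : ℝ := -Real.log θ with hb_def
  set L : ℝ := -Real.log x with hL_def
  have hb : 0 < b := neg_pos.mpr hlogθ
  have hL : 0 < L := neg_pos.mpr hlogx
  have habsθ : |Real.log θ| = b := abs_of_neg hlogθ
  have habsx : |Real.log x| = L := abs_of_neg hlogx
  rw [habsθ, habsx]
  set c : ℝ := a / b with hc_def
  have hc : 0 < c := div_pos ha hb
  have hbc : b * c = a := by rw [hc_def]; field_simp [hb.ne']
  set g : ℝ → ℝ := fun u => Real.exp (-u) * u ^ (c - 1) with hg_def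
  have hθc : θ ^ c = Real.exp (-a) := by
    rw [Real.rpow_def_of_pos hθ0]
    congr 1
    have h1 : Real.log θ = -b := by rw [hb_def]; ring
    rw [h1]; nlinarith [hbc]
  set A : ℕ → ℝ := fun k => L * θ ^ (k + 1) with hA_def
  have hApos : ∀ k, 0 < A k := fun k => mul_pos hL (pow_pos hθ0 _)
  have hAmono : ∀ j k : ℕ, j ≤ k → A k ≤ A j := by
    intro j k hjk
    exact mul_le_mul_of_nonneg_left
      (pow_le_pow_of_le_one hθ0.le hθ1.le (by omega)) hL.le
  have hgcont : ContinuousOn g (Ioi (0 : ℝ)) := by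
    apply ContinuousOn.mul (Real.continuous_exp.comp continuous_neg).continuousOn
    exact fun u hu =>
      (Real.continuousAt_rpow_const u (c - 1) (Or.inl (ne_of_gt hu))).continuousWithinAt
  have hgint : ∀ p q : ℝ, 0 < p → 0 < q → IntervalIntegrable g volume p q := by
    intro p q hp hq
    apply (hgcont.mono ?_).intervalIntegrable
    intro u hu
    rcases le_total p q with h | h
    · rw [uIcc_of_le h] at hu; exact lt_of_lt_of_le hp hu.1
    · rw [uIcc_of_ge h] at hu; exact lt_of_lt_of_le hq hu.1
  have hgnonneg : ∀ u : ℝ, 0 < u → 0 ≤ g u := fun u hu =>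
    mul_nonneg (Real.exp_pos _).le (Real.rpow_nonneg hu.le _)
  have hpow : ∀ n : ℕ, (L * θ ^ n) ^ c = L ^ c * Real.exp (-a * n) := by
    intro n
    rw [Real.mul_rpow hL.le (pow_pos hθ0 n).le]
    congr 1
    rw [← Real.rpow_natCast θ n, ← Real.rpow_mul hθ0.le, mul_comm,
      Real.rpow_mul hθ0.le, Real.rpow_natCast, hθc, ← Real.exp_nat_mul]
    congr 1; ring
  have hLc : L ^ (-c) * L ^ c = 1 := by
    rw [← Real.rpow_add hL]; simp
  have hLc' : (0:ℝ) < L ^ c := Real.rpow_pos_of_pos hL c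
  have hLc'' : (0:ℝ) < L ^ (-c) := Real.rpow_pos_of_pos hL (-c)
  -- key per-term estimate
  have key : ∀ k : ℕ, x ^ (θ ^ (k + 1)) * Real.exp (-a * ((k : ℝ) + 1)) ≤
      Real.exp a / b * L ^ (-c) * ∫ u in (A (k + 1))..(A k), g u := by
    intro k
    set p := A (k + 1) with hp_def
    set q := A k with hq_def
    have hp : 0 < p := hApos _
    have hq : 0 < q := hApos _
    have hpq : p ≤ q := hAmono k (k+1) (by omega)
    have step1 : (∫ u in p..q, Real.exp (-q) * u ^ (c - 1)) ≤ ∫ u in p..q, g u := by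
      apply intervalIntegral.integral_mono_on hpq
      · exact (intervalIntegral.intervalIntegrable_rpow' (by linarith)).const_mul _
      · exact hgint p q hp hq
      · intro u hu
        have hu0 : 0 < u := lt_of_lt_of_le hp hu.1
        exact mul_le_mul_of_nonneg_right (Real.exp_le_exp.mpr (neg_le_neg hu.2))
          (Real.rpow_nonneg hu0.le _)
    have step2 : (∫ u in p..q, Real.exp (-q) * u ^ (c - 1))
        = Real.exp (-q) * ((q ^ c - p ^ c) / c) := by
      rw [intervalIntegral.integral_const_mul,
        integral_rpow (Or.inl (by linarith : (-1:ℝ) < c - 1))]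
      have h1 : c - 1 + 1 = c := by ring
      rw [h1]
    have hxe : x ^ (θ ^ (k + 1)) = Real.exp (-q) := by
      rw [Real.rpow_def_of_pos hx0]
      congr 1
      have h1 : Real.log x = -L := by rw [hL_def]; ring
      rw [h1, hq_def, hA_def]; ring
    have hq' : q ^ c = L ^ c * Real.exp (-a * ((k:ℝ)+1)) := by
      have h := hpow (k+1)
      rw [hq_def, hA_def]
      push_cast at h ⊢
      exact h
    have hp' : p ^ c = L ^ c * (Real.exp (-a * ((k:ℝ)+1)) * Real.exp (-a)) := by
      have h := hpow (k+2)
      rw [hp_def, hA_def]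
      push_cast at h ⊢
      rw [h, ← Real.exp_add]
      congr 2; ring
    have hst : Real.exp a * Real.exp (-a) = 1 := by rw [← Real.exp_add]; simp
    have hone : 1 ≤ (Real.exp a - 1) / a := by
      rw [le_div_iff₀ ha]
      have := Real.add_one_le_exp a
      linarith
    have hT : 0 ≤ x ^ (θ ^ (k + 1)) * Real.exp (-a * ((k:ℝ)+1)) :=
      mul_nonneg (Real.rpow_nonneg hx0.le _) (Real.exp_pos _).le
    calc x ^ (θ ^ (k + 1)) * Real.exp (-a * ((k : ℝ) + 1))
        ≤ (x ^ (θ ^ (k + 1)) * Real.exp (-a * ((k:ℝ)+1))) * ((Real.exp a - 1) / a) := by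
          nlinarith
      _ = Real.exp a / b * L ^ (-c) * (Real.exp (-q) * ((q ^ c - p ^ c) / c)) := by
          rw [hxe, hq', hp']
          have h3 : Real.exp a * (1 - Real.exp (-a)) = Real.exp a - 1 := by
            rw [mul_sub, hst, mul_one]
          have h4 : Real.exp a / b * L ^ (-c) *
              (Real.exp (-q) * ((L ^ c * Real.exp (-a*((k:ℝ)+1))
                - L ^ c * (Real.exp (-a*((k:ℝ)+1)) * Real.exp (-a))) / c))
              = Real.exp (-q) * Real.exp (-a*((k:ℝ)+1)) * (L ^ (-c) * L ^ c) *
                (Real.exp a * (1 - Real.exp (-a))) / (b * c) := by ring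
          rw [h4, hbc, hLc, mul_one, h3]
          ring
      _ = Real.exp a / b * L ^ (-c) * (∫ u in p..q, Real.exp (-q) * u ^ (c - 1)) := by
          rw [step2]
      _ ≤ Real.exp a / b * L ^ (-c) * ∫ u in p..q, g u := by
          apply mul_le_mul_of_nonneg_left step1 (by positivity)
  -- sum of interval integrals is bounded by Gamma
  have hsum_int : ∀ N : ℕ,
      (∑ k ∈ Finset.range N, ∫ u in (A (k+1))..(A k), g u) ≤ Real.Gamma c := by
    intro N
    have hadj : ∑ k ∈ Finset.range N, ∫ u in (A k)..(A (k+1)), g u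
        = ∫ u in (A 0)..(A N), g u :=
      intervalIntegral.sum_integral_adjacent_intervals
        (fun k _ => hgint _ _ (hApos _) (hApos _))
    have hswap : ∑ k ∈ Finset.range N, ∫ u in (A (k+1))..(A k), g u
        = ∫ u in (A N)..(A 0), g u := by
      calc ∑ k ∈ Finset.range N, ∫ u in (A (k+1))..(A k), g u
          = ∑ k ∈ Finset.range N, -(∫ u in (A k)..(A (k+1)), g u) := by
            refine Finset.sum_congr rfl fun k _ => ?_
            rw [intervalIntegral.integral_symm]
        _ = -∫ u in (A 0)..(A N), g u := by rw [Finset.sum_neg_distrib, hadj]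
        _ = ∫ u in (A N)..(A 0), g u := (intervalIntegral.integral_symm _ _).symm
    rw [hswap]
    have hord : A N ≤ A 0 := hAmono 0 N (Nat.zero_le N)
    rw [intervalIntegral.integral_of_le hord, Real.Gamma_eq_integral hc]
    apply setIntegral_mono_set (Real.GammaIntegral_convergent hc)
    · filter_upwards [ae_restrict_mem measurableSet_Ioi] with u hu
      exact hgnonneg u hu
    · apply HasSubset.Subset.eventuallyLE
      intro u hu
      exact lt_of_lt_of_le (hApos N) hu.1.le
  -- conclude
  have hterm_nonneg : ∀ k : ℕ, 0 ≤ x ^ (θ ^ (k + 1)) * Real.exp (-a * ((k : ℝ) + 1)) :=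
    fun k => mul_nonneg (Real.rpow_nonneg hx0.le _) (Real.exp_pos _).le
  apply Real.tsum_le_of_sum_range_le hterm_nonneg
  intro N
  calc ∑ k ∈ Finset.range N, x ^ (θ ^ (k + 1)) * Real.exp (-a * ((k : ℝ) + 1))
      ≤ ∑ k ∈ Finset.range N, Real.exp a / b * L ^ (-c) * ∫ u in (A (k+1))..(A k), g u :=
        Finset.sum_le_sum fun k _ => key k
    _ = Real.exp a / b * L ^ (-c) *
        ∑ k ∈ Finset.range N, ∫ u in (A (k+1))..(A k), g u := by
        rw [Finset.mul_sum]
    _ ≤ Real.exp a / b * L ^ (-c) * Real.Gamma c :=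
        mul_le_mul_of_nonneg_left (hsum_int N) (by positivity)
    _ = Real.exp a / b * Real.Gamma c * L ^ (-c) := by ring
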